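/- Assume [C1]–[C4], and let (λ_n) be a sequence of positive random variables satisfying [D1]–[D3]. Then λ_n^{-1} ‖Σ̂_{Z,n} − Σ_Z‖_{ℓ∞} →^p 0 and P(min_{1≤i≤d} Σ̂_{Z,n}^{ii} > 0) → 1 as n → ∞. -/

import Mathlib

open Filter MeasureTheory ProbabilityTheory Matrix
open scoped Topology ENNReal NNReal

noncomputable section

/-- Entrywise ℓ∞ norm of a matrix. -/
def linf {m k : ℕ} (A : Matrix (Fin m) (Fin k) ℝ) : ℝ := ⨆ i, ⨆ j, |A i j|

/-- Entrywise ℓ2 (Frobenius) norm of a matrix. -/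
def l2 {m k : ℕ} (A : Matrix (Fin m) (Fin k) ℝ) : ℝ := Real.sqrt (∑ i, ∑ j, (A i j) ^ 2)

/-- ℓ1 norm of the off-diagonal part of a square matrix. -/
def l1off {d : ℕ} (A : Matrix (Fin d) (Fin d) ℝ) : ℝ :=
  ∑ i, ∑ j, if i = j then 0 else |A i j|

/-- The ℓw norm of a vector, w ∈ [1,∞]. -/
def vecNorm (w : ℝ≥0∞) {k : ℕ} (x : Fin k → ℝ) : ℝ :=
  if w = ⊤ then ⨆ i, |x i| else (∑ i, |x i| ^ w.toReal) ^ (1 / w.toReal)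

/-- The ℓw operator norm of a matrix. -/
def opNorm (w : ℝ≥0∞) {m k : ℕ} (A : Matrix (Fin m) (Fin k) ℝ) : ℝ :=
  sSup {c : ℝ | ∃ x : Fin k → ℝ, vecNorm w x = 1 ∧ c = vecNorm w (A.mulVec x)}

/-- Largest eigenvalue of a symmetric matrix (via the Rayleigh quotient). -/
def lamMax {d : ℕ} (A : Matrix (Fin d) (Fin d) ℝ) : ℝ :=
  sSup {c : ℝ | ∃ x : Fin d → ℝ, ∑ i, (x i) ^ 2 = 1 ∧ c = ∑ i, ∑ j, x i * A i j * x j}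

/-- Smallest eigenvalue of a symmetric matrix (via the Rayleigh quotient). -/
def lamMin {d : ℕ} (A : Matrix (Fin d) (Fin d) ℝ) : ℝ :=
  sInf {c : ℝ | ∃ x : Fin d → ℝ, ∑ i, (x i) ^ 2 = 1 ∧ c = ∑ i, ∑ j, x i * A i j * x j}

/-- s(A): number of nonzero off-diagonal entries. -/
def spars {d : ℕ} (A : Matrix (Fin d) (Fin d) ℝ) : ℕ :=
  Set.ncard {p : Fin d × Fin d | p.1 ≠ p.2 ∧ A p.1 p.2 ≠ 0}

/-- 𝔡(A): maximal number of nonzero off-diagonal entries in a column. -/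
def degree {d : ℕ} (A : Matrix (Fin d) (Fin d) ℝ) : ℕ :=
  ⨆ j : Fin d, Set.ncard {i : Fin d | i ≠ j ∧ A i j ≠ 0}

/-- `Z_n = O_p(a_n)` for random variables on a sequence of probability spaces. -/
def IsBigOp {Ω : ℕ → Type*} [∀ n, MeasurableSpace (Ω n)] (P : ∀ n, Measure (Ω n))
    (Z a : ∀ n, Ω n → ℝ) : Prop :=
  ∀ ε : ℝ, 0 < ε → ∃ M : ℝ, 0 < M ∧
    Filter.limsup (fun n => ((P n) {ω | M * a n ω < |Z n ω|}).toReal) Filter.atTop ≤ ε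

/-- `Z_n = o_p(a_n)`, i.e. `Z_n / a_n →ᵖ 0`. -/
def IsLittleOp {Ω : ℕ → Type*} [∀ n, MeasurableSpace (Ω n)] (P : ∀ n, Measure (Ω n))
    (Z a : ∀ n, Ω n → ℝ) : Prop :=
  ∀ ε : ℝ, 0 < ε →
    Filter.Tendsto (fun n => ((P n) {ω | ε * a n ω < |Z n ω|}).toReal) Filter.atTop (nhds 0)

/-- Column-wise vectorization of a square matrix. -/
def vecM {d : ℕ} (A : Matrix (Fin d) (Fin d) ℝ) : Fin (d * d) → ℝ :=
  fun k => A (finProdFinEquiv.symm k).2 (finProdFinEquiv.symm k).1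

/-- Kronecker product, reindexed to `Fin (d*d)`. -/
def kron {d : ℕ} (A B : Matrix (Fin d) (Fin d) ℝ) : Matrix (Fin (d * d)) (Fin (d * d)) ℝ :=
  Matrix.reindex finProdFinEquiv finProdFinEquiv (Matrix.kroneckerMap (· * ·) A B)

/-- J̃ := −J(Θ ⊗ Θ). -/
def tildeJ {m k : ℕ} (J : Matrix (Fin m) (Fin (k * k)) ℝ) (Θ : Matrix (Fin k) (Fin k) ℝ) :
    Matrix (Fin m) (Fin (k * k)) ℝ :=
  -(J * kron Θ Θ)

/-- Standard Gaussian measure on ℝ^k. -/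
def stdGaussianPi (k : ℕ) : Measure (Fin k → ℝ) :=
  MeasureTheory.Measure.pi fun _ => ProbabilityTheory.gaussianReal 0 1

instance (k : ℕ) : IsProbabilityMeasure (stdGaussianPi k) := by
  unfold stdGaussianPi; infer_instance

/-- diag(S)^{1/2}. -/
def diagSqrt {d : ℕ} (S : Matrix (Fin d) (Fin d) ℝ) : Matrix (Fin d) (Fin d) ℝ :=
  Matrix.diagonal fun i => Real.sqrt (S i i)

/-- Correlation matrix V⁻¹ S V⁻¹ with V = diag(S)^{1/2}. -/
def corrOf {d : ℕ} (S : Matrix (Fin d) (Fin d) ℝ) : Matrix (Fin d) (Fin d) ℝ :=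
  (diagSqrt S)⁻¹ * S * (diagSqrt S)⁻¹

/-- The weighted graphical-Lasso objective based on a covariance estimate `Sig`. -/
def objTheta {d : ℕ} (Sig : Matrix (Fin d) (Fin d) ℝ) (lam : ℝ)
    (Θ : Matrix (Fin d) (Fin d) ℝ) : ℝ :=
  Matrix.trace (Θ * Sig) - Real.log Θ.det +
    lam * ∑ i, ∑ j, if i = j then 0
      else Real.sqrt (Sig i i) * Real.sqrt (Sig j j) * |Θ i j|

/-- The graphical-Lasso objective based on a correlation estimate `R`. -/
def objK {d : ℕ} (R : Matrix (Fin d) (Fin d) ℝ) (lam : ℝ)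
    (K : Matrix (Fin d) (Fin d) ℝ) : ℝ :=
  Matrix.trace (K * R) - Real.log K.det + lam * l1off K


/-- auxiliary quadratic form -/
def clQf {k : ℕ} (A : Matrix (Fin k) (Fin k) ℝ) (x : Fin k → ℝ) : ℝ :=
  ∑ i, ∑ j, x i * A i j * x j

lemma cl_qf_eq_dot {k : ℕ} (A : Matrix (Fin k) (Fin k) ℝ) (x : Fin k → ℝ) :
    clQf A x = x ⬝ᵥ A.mulVec x := by
  simp [clQf, dotProduct, Matrix.mulVec, Finset.mul_sum, mul_assoc]

lemma cl_linf_nonneg {m k : ℕ} (A : Matrix (Fin m) (Fin k) ℝ) : 0 ≤ linf A :=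
  Real.iSup_nonneg fun _ => Real.iSup_nonneg fun _ => abs_nonneg _

lemma cl_abs_le_linf {m k : ℕ} (A : Matrix (Fin m) (Fin k) ℝ) (i : Fin m) (j : Fin k) :
    |A i j| ≤ linf A := by
  have h1 : |A i j| ≤ ⨆ j, |A i j| :=
    le_ciSup (Set.Finite.bddAbove (Set.finite_range fun j => |A i j|)) j
  have h2 : (⨆ j, |A i j|) ≤ linf A :=
    le_ciSup (Set.Finite.bddAbove (Set.finite_range fun i => ⨆ j, |A i j|)) i
  exact h1.trans h2

lemma cl_linf_le {m k : ℕ} (A : Matrix (Fin m) (Fin k) ℝ) {c : ℝ} (h0 : 0 ≤ c)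
    (h : ∀ i j, |A i j| ≤ c) : linf A ≤ c :=
  Real.iSup_le (fun i => Real.iSup_le (fun j => h i j) h0) h0

lemma cl_qf_abs_le {k : ℕ} (A : Matrix (Fin k) (Fin k) ℝ) (x : Fin k → ℝ)
    (hx : ∑ i, (x i) ^ 2 = 1) : |clQf A x| ≤ (k : ℝ) * linf A := by
  have h1 : |clQf A x| ≤ ∑ i, ∑ j, |x i| * linf A * |x j| := by
    refine (Finset.abs_sum_le_sum_abs _ _).trans (Finset.sum_le_sum fun i _ => ?_)
    refine (Finset.abs_sum_le_sum_abs _ _).trans (Finset.sum_le_sum fun j _ => ?_)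
    rw [abs_mul, abs_mul]
    have := cl_abs_le_linf A i j
    have h2 : |x i| * |A i j| ≤ |x i| * linf A :=
      mul_le_mul_of_nonneg_left this (abs_nonneg _)
    exact mul_le_mul_of_nonneg_right h2 (abs_nonneg _)
  have h2 : ∑ i, ∑ j, |x i| * linf A * |x j| = (∑ i, |x i|) ^ 2 * linf A := by
    rw [sq, Finset.sum_mul_sum, Finset.sum_mul]
    refine Finset.sum_congr rfl fun i _ => ?_
    rw [Finset.sum_mul]
    refine Finset.sum_congr rfl fun j _ => ?_
    ring
  have h3 : (∑ i, |x i|) ^ 2 ≤ (k : ℝ) := by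
    have := Finset.sum_mul_sq_le_sq_mul_sq Finset.univ (fun _ : Fin k => (1:ℝ)) (fun i => |x i|)
    simp only [one_mul, one_pow, sq_abs] at this
    simpa [hx, Finset.card_univ, mul_comm] using this
  calc |clQf A x| ≤ (∑ i, |x i|) ^ 2 * linf A := by rw [← h2]; exact h1
    _ ≤ (k : ℝ) * linf A := mul_le_mul_of_nonneg_right h3 (cl_linf_nonneg A)

lemma cl_bddBelow_rayleigh {k : ℕ} (A : Matrix (Fin k) (Fin k) ℝ) :
    BddBelow {c : ℝ | ∃ x : Fin k → ℝ, ∑ i, (x i) ^ 2 = 1 ∧ c = ∑ i, ∑ j, x i * A i j * x j} := by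
  refine ⟨-((k : ℝ) * linf A), fun c hc => ?_⟩
  obtain ⟨x, hx, rfl⟩ := hc
  exact neg_le_of_abs_le (cl_qf_abs_le A x hx)

lemma cl_bddAbove_rayleigh {k : ℕ} (A : Matrix (Fin k) (Fin k) ℝ) :
    BddAbove {c : ℝ | ∃ x : Fin k → ℝ, ∑ i, (x i) ^ 2 = 1 ∧ c = ∑ i, ∑ j, x i * A i j * x j} := by
  refine ⟨(k : ℝ) * linf A, fun c hc => ?_⟩
  obtain ⟨x, hx, rfl⟩ := hc
  exact le_of_abs_le (cl_qf_abs_le A x hx)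

lemma cl_lamMin_le_qf {k : ℕ} (A : Matrix (Fin k) (Fin k) ℝ) (x : Fin k → ℝ)
    (hx : ∑ i, (x i) ^ 2 = 1) : lamMin A ≤ clQf A x :=
  csInf_le (cl_bddBelow_rayleigh A) ⟨x, hx, rfl⟩

lemma cl_single_sq_sum {k : ℕ} (i : Fin k) : ∑ j, ((Pi.single i 1 : Fin k → ℝ) j) ^ 2 = 1 := by
  simp [Pi.single_apply]

lemma cl_qf_single {k : ℕ} (A : Matrix (Fin k) (Fin k) ℝ) (i : Fin k) :
    clQf A (Pi.single i 1 : Fin k → ℝ) = A i i := by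
  simp [clQf, Pi.single_apply, Finset.sum_ite_eq', mul_ite, ite_mul]

lemma cl_lamMin_le_diag {k : ℕ} (A : Matrix (Fin k) (Fin k) ℝ) (i : Fin k) :
    lamMin A ≤ A i i := by
  have := cl_lamMin_le_qf A (Pi.single i 1 : Fin k → ℝ) (cl_single_sq_sum i)
  rwa [cl_qf_single] at this

lemma cl_diag_le_lamMax {k : ℕ} (A : Matrix (Fin k) (Fin k) ℝ) (i : Fin k) :
    A i i ≤ lamMax A := by
  have := le_csSup (cl_bddAbove_rayleigh A)
    (⟨Pi.single i 1, cl_single_sq_sum i, rfl⟩ :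
      clQf A (Pi.single i 1 : Fin k → ℝ) ∈
        {c : ℝ | ∃ x : Fin k → ℝ, ∑ i, (x i) ^ 2 = 1 ∧ c = ∑ i, ∑ j, x i * A i j * x j})
  rwa [cl_qf_single] at this

lemma cl_qf_smul {k : ℕ} (A : Matrix (Fin k) (Fin k) ℝ) (c : ℝ) (x : Fin k → ℝ) :
    clQf A (c • x) = c ^ 2 * clQf A x := by
  simp only [clQf, Finset.mul_sum]
  refine Finset.sum_congr rfl fun i _ => Finset.sum_congr rfl fun j _ => ?_
  simp [Pi.smul_apply, smul_eq_mul]; ring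

lemma cl_le_lamMin {k : ℕ} (hk : 1 ≤ k) (A : Matrix (Fin k) (Fin k) ℝ) {b : ℝ}
    (h : ∀ x : Fin k → ℝ, ∑ i, (x i) ^ 2 = 1 → b ≤ clQf A x) : b ≤ lamMin A := by
  refine le_csInf ⟨_, (⟨Pi.single ⟨0, by omega⟩ 1, cl_single_sq_sum _, rfl⟩ :
    _ ∈ {c : ℝ | ∃ x : Fin k → ℝ, ∑ i, (x i) ^ 2 = 1 ∧ c = ∑ i, ∑ j, x i * A i j * x j})⟩ ?_
  rintro c ⟨x, hx, rfl⟩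
  exact h x hx

lemma cl_sum_sq_pos {k : ℕ} {x : Fin k → ℝ} (hx : x ≠ 0) : 0 < ∑ i, (x i) ^ 2 := by
  obtain ⟨i, hi⟩ := Function.ne_iff.mp hx
  have hi' : x i ≠ 0 := by simpa using hi
  have : (0:ℝ) < x i ^ 2 := by positivity
  exact Finset.sum_pos' (fun j _ => sq_nonneg _) ⟨i, Finset.mem_univ i, this⟩

lemma cl_lamMin_mul_le_qf {k : ℕ} (A : Matrix (Fin k) (Fin k) ℝ) (x : Fin k → ℝ) :
    lamMin A * ∑ i, (x i) ^ 2 ≤ clQf A x := by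
  rcases eq_or_ne x 0 with rfl | hx
  · simp [clQf]
  · have ht : 0 < ∑ i, (x i) ^ 2 := cl_sum_sq_pos hx
    set t := ∑ i, (x i) ^ 2 with htdef
    have hts : Real.sqrt t > 0 := Real.sqrt_pos.mpr ht
    set y : Fin k → ℝ := (Real.sqrt t)⁻¹ • x with hy
    have hy1 : ∑ i, (y i) ^ 2 = 1 := by
      simp only [hy, Pi.smul_apply, smul_eq_mul, mul_pow, ← Finset.mul_sum]
      rw [← htdef, inv_pow, Real.sq_sqrt ht.le]
      exact inv_mul_cancel₀ ht.ne'
    have := cl_lamMin_le_qf A y hy1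
    have hq : clQf A y = t⁻¹ * clQf A x := by
      rw [hy, cl_qf_smul, inv_pow, Real.sq_sqrt ht.le]
    rw [hq] at this
    calc lamMin A * t ≤ (t⁻¹ * clQf A x) * t := mul_le_mul_of_nonneg_right this ht.le
      _ = clQf A x := by field_simp

lemma cl_lamMin_pos {k : ℕ} (hk : 1 ≤ k) {A : Matrix (Fin k) (Fin k) ℝ}
    (hA : A.PosDef) : 0 < lamMin A := by
  set S : Set (Fin k → ℝ) := {x | ∑ i, (x i) ^ 2 = 1} with hS
  have hSne : S.Nonempty := ⟨Pi.single ⟨0, by omega⟩ 1, cl_single_sq_sum _⟩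
  have hcont : Continuous fun x : Fin k → ℝ => ∑ i, (x i) ^ 2 := by continuity
  have hclosed : IsClosed S := isClosed_eq hcont continuous_const
  have hbdd : Bornology.IsBounded S := by
    rw [Metric.isBounded_iff_subset_closedBall 0]
    refine ⟨1, fun x hx => ?_⟩
    simp only [Metric.mem_closedBall, dist_zero_right]
    rw [pi_norm_le_iff_of_nonneg zero_le_one]
    intro i
    rw [Real.norm_eq_abs, ← Real.sqrt_one, ← Real.sqrt_sq_eq_abs]
    refine Real.sqrt_le_sqrt ?_
    rw [show (1:ℝ) = ∑ i, (x i) ^ 2 from hx.symm]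
    exact Finset.single_le_sum (fun j _ => sq_nonneg (x j)) (Finset.mem_univ i)
  have hcompact : IsCompact S := Metric.isCompact_of_isClosed_isBounded hclosed hbdd
  have hfc : ContinuousOn (clQf A) S := by
    refine Continuous.continuousOn ?_
    unfold clQf
    continuity
  obtain ⟨x₀, hx₀S, hmin⟩ := hcompact.exists_isMinOn hSne hfc
  have hx₀pos : 0 < clQf A x₀ := by
    rw [cl_qf_eq_dot]
    have hx₀ne : x₀ ≠ 0 := by
      intro h; rw [hS] at hx₀S; simp [h] at hx₀S
    have := hA.dotProduct_mulVec_pos hx₀ne; simpa using this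
  exact lt_of_lt_of_le hx₀pos (cl_le_lamMin hk A fun x hx => hmin hx)

lemma cl_posDef_of_lamMin_pos {k : ℕ} {A : Matrix (Fin k) (Fin k) ℝ}
    (hsym : A.IsHermitian) (h : 0 < lamMin A) : A.PosDef := by
  refine Matrix.PosDef.of_dotProduct_mulVec_pos hsym fun x hx => ?_
  have ht : 0 < ∑ i, (x i) ^ 2 := cl_sum_sq_pos hx
  have := cl_lamMin_mul_le_qf A x
  have h2 : 0 < clQf A x := lt_of_lt_of_le (by positivity) this
  rw [cl_qf_eq_dot] at h2
  simpa using h2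

lemma cl_qf_sub {k : ℕ} (A B : Matrix (Fin k) (Fin k) ℝ) (x : Fin k → ℝ) :
    clQf (B - A) x = clQf B x - clQf A x := by
  simp only [clQf, ← Finset.sum_sub_distrib]
  refine Finset.sum_congr rfl fun i _ => Finset.sum_congr rfl fun j _ => ?_
  simp [Matrix.sub_apply]; ring

lemma cl_lamMin_perturb {k : ℕ} (hk : 1 ≤ k) (A B : Matrix (Fin k) (Fin k) ℝ) :
    lamMin A - (k : ℝ) * linf (B - A) ≤ lamMin B := by
  refine cl_le_lamMin hk B fun x hx => ?_
  have h1 := cl_lamMin_le_qf A x hx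
  have h2 := cl_qf_abs_le (B - A) x hx
  have h3 := cl_qf_sub A B x
  have := neg_le_of_abs_le h2
  linarith

lemma cl_inv_qf_le {k : ℕ} {A : Matrix (Fin k) (Fin k) ℝ} (hA : A.PosDef)
    {μ : ℝ} (hμ : 0 < μ) (hmin : μ ≤ lamMin A) (w : Fin k → ℝ) :
    w ⬝ᵥ (A⁻¹).mulVec w ≤ (∑ i, (w i) ^ 2) / μ := by
  set z := (A⁻¹).mulVec w with hz
  have hdet : IsUnit A.det := isUnit_iff_ne_zero.mpr hA.det_pos.ne'
  have hAz : A.mulVec z = w := by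
    rw [hz, Matrix.mulVec_mulVec, Matrix.mul_nonsing_inv _ hdet, Matrix.one_mulVec]
  have hwz : w ⬝ᵥ z = z ⬝ᵥ A.mulVec z := by rw [← hAz, dotProduct_comm]
  have hlow : μ * ∑ i, (z i) ^ 2 ≤ w ⬝ᵥ z := by
    rw [hwz, ← cl_qf_eq_dot]
    calc μ * ∑ i, (z i) ^ 2 ≤ lamMin A * ∑ i, (z i) ^ 2 :=
          mul_le_mul_of_nonneg_right hmin (Finset.sum_nonneg fun i _ => sq_nonneg _)
      _ ≤ clQf A z := cl_lamMin_mul_le_qf A z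
  have hCS : (w ⬝ᵥ z) ^ 2 ≤ (∑ i, (w i) ^ 2) * ∑ i, (z i) ^ 2 :=
    Finset.sum_mul_sq_le_sq_mul_sq Finset.univ w z
  rcases le_or_gt (w ⬝ᵥ z) 0 with h | h
  · refine h.trans ?_
    positivity
  · have ht : 0 < ∑ i, (z i) ^ 2 := by
      by_contra hc
      push_neg at hc
      have h0 : ∑ i, (z i) ^ 2 = 0 := le_antisymm hc (Finset.sum_nonneg fun i _ => sq_nonneg _)
      rw [h0, mul_zero] at hCS
      nlinarith
    have h4 : (w ⬝ᵥ z) * (μ * ∑ i, (z i) ^ 2) ≤ (∑ i, (w i) ^ 2) * ∑ i, (z i) ^ 2 := by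
      calc (w ⬝ᵥ z) * (μ * ∑ i, (z i) ^ 2) ≤ (w ⬝ᵥ z) * (w ⬝ᵥ z) :=
            mul_le_mul_of_nonneg_left hlow h.le
        _ = (w ⬝ᵥ z) ^ 2 := (sq _).symm
        _ ≤ _ := hCS
    have h5 : (w ⬝ᵥ z) * μ ≤ ∑ i, (w i) ^ 2 :=
      (mul_le_mul_iff_of_pos_right ht).mp (by linarith [h4])
    rw [le_div_iff₀ hμ]
    exact h5

lemma cl_psd_bilinear_abs {k : ℕ} {M : Matrix (Fin k) (Fin k) ℝ} (hM : M.PosSemidef)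
    (u v : Fin k → ℝ) : |u ⬝ᵥ M.mulVec v| ≤ (u ⬝ᵥ M.mulVec u + v ⬝ᵥ M.mulVec v) / 2 := by
  have hsym : ∀ a b : Fin k → ℝ, a ⬝ᵥ M.mulVec b = b ⬝ᵥ M.mulVec a := by
    intro a b
    have hMt : Mᵀ = M := by
      have := hM.1
      rwa [Matrix.IsHermitian, Matrix.conjTranspose_eq_transpose_of_trivial] at this
    rw [Matrix.dotProduct_mulVec, ← Matrix.mulVec_transpose, hMt, dotProduct_comm]
  have hpos : ∀ x : Fin k → ℝ, 0 ≤ x ⬝ᵥ M.mulVec x := fun x => by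
    have := hM.dotProduct_mulVec_nonneg x; simpa using this
  have h1 := hpos (u - v)
  have h2 := hpos (u + v)
  have e1 : (u - v) ⬝ᵥ M.mulVec (u - v)
      = u ⬝ᵥ M.mulVec u - 2 * (u ⬝ᵥ M.mulVec v) + v ⬝ᵥ M.mulVec v := by
    rw [Matrix.mulVec_sub, dotProduct_sub, sub_dotProduct, sub_dotProduct,
      hsym v u]
    ring
  have e2 : (u + v) ⬝ᵥ M.mulVec (u + v)
      = u ⬝ᵥ M.mulVec u + 2 * (u ⬝ᵥ M.mulVec v) + v ⬝ᵥ M.mulVec v := by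
    rw [Matrix.mulVec_add, dotProduct_add, add_dotProduct, add_dotProduct,
      hsym v u]
    ring
  rw [abs_le]
  constructor <;> [nlinarith [h2, e2]; nlinarith [h1, e1]]

lemma cl_triple_entry {d r : ℕ} (Δ : Matrix (Fin d) (Fin r) ℝ) (M : Matrix (Fin r) (Fin r) ℝ)
    (i j : Fin d) : (Δ * M * Δᵀ) i j = (fun k => Δ i k) ⬝ᵥ M.mulVec (fun l => Δ j l) := by
  simp only [Matrix.mul_apply, dotProduct, Matrix.mulVec, Matrix.transpose_apply,
    Finset.sum_mul, Finset.mul_sum, mul_assoc]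
  exact Finset.sum_comm

lemma cl_row_sq_le {d r : ℕ} (Δ : Matrix (Fin d) (Fin r) ℝ) (i : Fin d) :
    ∑ k, (Δ i k) ^ 2 ≤ (r : ℝ) * linf Δ ^ 2 := by
  calc ∑ k, (Δ i k) ^ 2 ≤ ∑ _k : Fin r, linf Δ ^ 2 := by
        refine Finset.sum_le_sum fun k _ => ?_
        rw [← sq_abs]
        exact pow_le_pow_left₀ (abs_nonneg _) (cl_abs_le_linf Δ i k) 2
    _ = (r : ℝ) * linf Δ ^ 2 := by simp [mul_comm]

lemma cl_triple_entry_bound {d r : ℕ} (Δ : Matrix (Fin d) (Fin r) ℝ)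
    {A : Matrix (Fin r) (Fin r) ℝ} (hA : A.PosDef) {μ : ℝ} (hμ : 0 < μ)
    (hmin : μ ≤ lamMin A) (i j : Fin d) :
    |(Δ * A⁻¹ * Δᵀ) i j| ≤ (r : ℝ) * linf Δ ^ 2 / μ := by
  rw [cl_triple_entry]
  have hpsd : (A⁻¹).PosSemidef := hA.inv.posSemidef
  refine (cl_psd_bilinear_abs hpsd _ _).trans ?_
  have h1 := cl_inv_qf_le hA hμ hmin (fun k => Δ i k)
  have h2 := cl_inv_qf_le hA hμ hmin (fun k => Δ j k)
  have h3 := cl_row_sq_le Δ i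
  have h4 := cl_row_sq_le Δ j
  have h5 : (∑ k, (Δ i k) ^ 2) / μ ≤ (r : ℝ) * linf Δ ^ 2 / μ := (div_le_div_iff_of_pos_right hμ).mpr h3
  have h6 : (∑ k, (Δ j k) ^ 2) / μ ≤ (r : ℝ) * linf Δ ^ 2 / μ := (div_le_div_iff_of_pos_right hμ).mpr h4
  linarith

lemma cl_key_identity {d r : ℕ} (A : Matrix (Fin r) (Fin r) ℝ) (hdet : IsUnit A.det)
    (hsym : Aᵀ = A) (C β : Matrix (Fin d) (Fin r) ℝ) :
    (C * A⁻¹) * A * (C * A⁻¹)ᵀ - (C * βᵀ + β * Cᵀ - β * A * βᵀ) =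
      (C - β * A) * A⁻¹ * (C - β * A)ᵀ := by
  have h1 : A * A⁻¹ = 1 := Matrix.mul_nonsing_inv A hdet
  have h2 : A⁻¹ * A = 1 := Matrix.nonsing_inv_mul A hdet
  have hit : (A⁻¹)ᵀ = A⁻¹ := by rw [Matrix.transpose_nonsing_inv, hsym]
  have e0 : (C * A⁻¹) * A * (C * A⁻¹)ᵀ = C * A⁻¹ * Cᵀ := by
    rw [Matrix.transpose_mul, hit, Matrix.mul_assoc (C * A⁻¹), ← Matrix.mul_assoc A, h1,
      Matrix.one_mul, Matrix.mul_assoc]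
  rw [e0]
  have e1 : (C - β * A) * A⁻¹ * (C - β * A)ᵀ
      = C * A⁻¹ * Cᵀ - C * βᵀ - β * Cᵀ + β * A * βᵀ := by
    rw [Matrix.transpose_sub, Matrix.transpose_mul, hsym]
    rw [Matrix.sub_mul, Matrix.sub_mul, Matrix.mul_sub, Matrix.mul_sub]
    rw [← Matrix.mul_assoc (C * A⁻¹) A βᵀ, Matrix.mul_assoc C A⁻¹ A, h2, Matrix.mul_one]
    rw [Matrix.mul_assoc β A A⁻¹, h1, Matrix.mul_one, ← Matrix.mul_assoc β A βᵀ]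
    abel
  rw [e1]
  abel

/-- The key deterministic step. -/
lemma cl_main_det {d r : ℕ} (hr : 1 ≤ r)
    {X A Adag : Matrix (Fin r) (Fin r) ℝ} {C B : Matrix (Fin d) (Fin r) ℝ}
    {Y Zh Zb Z : Matrix (Fin d) (Fin d) ℝ}
    (hXpd : X.PosDef) (hA : A.PosSemidef)
    (hAdag : IsUnit A.det → Adag = A⁻¹)
    (hZh : Zh = Y - (C * Adag) * A * (C * Adag)ᵀ)
    (hZb : Zb = Y - C * Bᵀ - B * Cᵀ + B * A * Bᵀ)
    {M lamv ε c2 rs : ℝ} (hM : 0 < M) (hlam : 0 < lamv) (hε : 0 < ε)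
    (h1 : (lamMin X)⁻¹ ≤ M)
    (h2 : linf (A - X) ≤ lamv)
    (hrs : (r : ℝ) * lamv ≤ rs)
    (h3 : rs ≤ c2)
    (hc2a : c2 ≤ (2*M)⁻¹) (hc2b : c2 ≤ ε/(4*M))
    (h4 : linf (C - B * A) ≤ lamv)
    (h5 : linf (Zb - Z) ≤ (ε/2) * lamv) :
    linf (Zh - Z) ≤ ε * lamv := by
  have hminX : 0 < lamMin X := cl_lamMin_pos hr hXpd
  have hMinv : M⁻¹ ≤ lamMin X := by
    have := inv_anti₀ (inv_pos.mpr hminX) h1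
    simpa using this
  set μ : ℝ := (2*M)⁻¹ with hμdef
  have hμ : 0 < μ := by positivity
  have hμle : μ ≤ lamMin A := by
    have hp := cl_lamMin_perturb hr X A
    have : (r : ℝ) * linf (A - X) ≤ c2 := by
      calc (r : ℝ) * linf (A - X) ≤ (r : ℝ) * lamv :=
            mul_le_mul_of_nonneg_left h2 (Nat.cast_nonneg r)
        _ ≤ rs := hrs
        _ ≤ c2 := h3
    have hMc : M⁻¹ - (2*M)⁻¹ = (2*M)⁻¹ := by field_simp; ring
    calc μ = M⁻¹ - (2*M)⁻¹ := by rw [hMc]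
      _ ≤ lamMin X - (r : ℝ) * linf (A - X) := by linarith
      _ ≤ lamMin A := hp
  have hApd : A.PosDef := cl_posDef_of_lamMin_pos hA.1 (lt_of_lt_of_le hμ hμle)
  have hdet : IsUnit A.det := isUnit_iff_ne_zero.mpr hApd.det_pos.ne'
  have hsymA : Aᵀ = A := by
    have := hA.1
    rwa [Matrix.IsHermitian, Matrix.conjTranspose_eq_transpose_of_trivial] at this
  rw [hAdag hdet] at hZh
  -- identity
  have hid : Zb - Zh = (C - B * A) * A⁻¹ * (C - B * A)ᵀ := by
    rw [hZh, hZb, ← cl_key_identity A hdet hsymA C B]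
    abel
  set Δ := C - B * A with hΔ
  -- entry bound for Zb - Zh
  have hbound : ∀ i j, |(Zb - Zh) i j| ≤ (ε/2) * lamv := by
    intro i j
    rw [hid]
    refine (cl_triple_entry_bound Δ hApd hμ hμle i j).trans ?_
    have hlinfΔ : 0 ≤ linf Δ := cl_linf_nonneg Δ
    have e0 : linf Δ ^ 2 ≤ lamv ^ 2 := by nlinarith
    have e1 : (r : ℝ) * linf Δ ^ 2 ≤ ((r : ℝ) * lamv) * lamv := by
      have := mul_le_mul_of_nonneg_left e0 (Nat.cast_nonneg (α := ℝ) r)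
      nlinarith
    have e2 : ((r : ℝ) * lamv) * lamv ≤ (ε/(4*M)) * lamv := by
      refine mul_le_mul_of_nonneg_right ?_ hlam.le
      exact hrs.trans (h3.trans hc2b)
    have e3 : (r : ℝ) * linf Δ ^ 2 / μ = (2*M) * ((r : ℝ) * linf Δ ^ 2) := by
      rw [hμdef, div_eq_mul_inv, inv_inv, mul_comm]
    rw [e3]
    calc (2*M) * ((r : ℝ) * linf Δ ^ 2) ≤ (2*M) * ((ε/(4*M)) * lamv) := by
          refine mul_le_mul_of_nonneg_left (e1.trans e2) (by positivity)
      _ = (ε/2) * lamv := by field_simp; ring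
  refine cl_linf_le _ (by positivity) fun i j => ?_
  have e4 : (Zh - Z) i j = -((Zb - Zh) i j) + (Zb - Z) i j := by
    simp only [Matrix.sub_apply]; ring
  rw [e4]
  calc |(-((Zb - Zh) i j) + (Zb - Z) i j)| ≤ |(Zb - Zh) i j| + |(Zb - Z) i j| := by
        refine (abs_add_le _ _).trans ?_
        rw [abs_neg]
    _ ≤ (ε/2) * lamv + (ε/2) * lamv := add_le_add (hbound i j) ((cl_abs_le_linf _ i j).trans h5)
    _ = ε * lamv := by ring

/-- probability helpers -/
lemma cl_measure_le {Ωn : Type*} [MeasurableSpace Ωn] (μ : Measure Ωn) [IsProbabilityMeasure μ]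
    {S T U : Set Ωn} (h : S ⊆ T ∪ U) : (μ S).toReal ≤ (μ T).toReal + (μ U).toReal := by
  have h1 : μ S ≤ μ T + μ U := (measure_mono h).trans (measure_union_le T U)
  have ht : μ T ≠ ⊤ := (measure_lt_top μ T).ne
  have hu : μ U ≠ ⊤ := (measure_lt_top μ U).ne
  calc (μ S).toReal ≤ (μ T + μ U).toReal := ENNReal.toReal_mono (by finiteness) h1
    _ = (μ T).toReal + (μ U).toReal := ENNReal.toReal_add ht hu

lemma cl_prob_le_one {Ωn : Type*} [MeasurableSpace Ωn] (μ : Measure Ωn) [IsProbabilityMeasure μ]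
    (S : Set Ωn) : (μ S).toReal ≤ 1 := by
  have := ENNReal.toReal_mono (by simp) (prob_le_one (μ := μ) (s := S))
  simpa using this

lemma cl_tendsto_zero (a : ℕ → ℝ) (h0 : ∀ n, 0 ≤ a n)
    (h : ∀ δ : ℝ, 0 < δ → ∀ᶠ n in atTop, a n < δ) : Tendsto a atTop (nhds 0) :=
  NormedAddCommGroup.tendsto_nhds_zero.mpr fun ε hε => (h ε hε).mono fun n hn => by
    rw [Real.norm_eq_abs, abs_of_nonneg (h0 n)]; exact hn

lemma cl_ev_lt_of_tendsto {a : ℕ → ℝ} (h : Tendsto a atTop (nhds 0)) {δ : ℝ} (hδ : 0 < δ) :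
    ∀ᶠ n in atTop, a n < δ :=
  (NormedAddCommGroup.tendsto_nhds_zero.mp h δ hδ).mono fun n hn =>
    lt_of_le_of_lt (le_abs_self _) hn

lemma cl_ev_lt_of_limsup {a : ℕ → ℝ} (hb : ∀ n, a n ≤ 1) {c δ : ℝ} (h : limsup a atTop ≤ c)
    (hδ : 0 < δ) : ∀ᶠ n in atTop, a n < c + δ := by
  refine eventually_lt_of_limsup_lt (lt_of_le_of_lt h (by linarith)) ?_
  exact isBoundedUnder_of ⟨1, fun n => hb n⟩


set_option maxHeartbeats 2000000 in
/-- Consistency of Σ̂_{Z,n} and asymptotic positivity of its diagonal (Lemma C.3). -/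
theorem sigmaZhat_consistency
    {Ω : ℕ → Type*} [∀ n, MeasurableSpace (Ω n)]
    (P : ∀ n, Measure (Ω n)) [∀ n, IsProbabilityMeasure (P n)]
    (d r : ℕ → ℕ) (hd : ∀ n, 2 ≤ d n)
    -- the (non-random) factor loading matrices β
    (β : ∀ n, Matrix (Fin (d n)) (Fin (r n)) ℝ)
    -- the random matrices Σ_X, Σ_Z, a.s. positive definite
    (SigX : ∀ n, Ω n → Matrix (Fin (r n)) (Fin (r n)) ℝ)
    (hSigX : ∀ n, ∀ᵐ ω ∂(P n), (SigX n ω).PosDef)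
    (SigZ : ∀ n, Ω n → Matrix (Fin (d n)) (Fin (d n)) ℝ)
    (hSigZ : ∀ n, ∀ᵐ ω ∂(P n), (SigZ n ω).PosDef)
    -- Σ_Y := β Σ_X βᵀ + Σ_Z
    (SigY : ∀ n, Ω n → Matrix (Fin (d n)) (Fin (d n)) ℝ)
    (hSigY : ∀ n ω, SigY n ω = β n * SigX n ω * (β n)ᵀ + SigZ n ω)
    -- the estimators Σ̂_{Y,n}, Σ̂_{X,n}, Σ̂_{YX,n} and Σ̂_{X,n}^†
    (SigYhat : ∀ n, Ω n → Matrix (Fin (d n)) (Fin (d n)) ℝ)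
    (hSigYhat : ∀ n ω, (SigYhat n ω).IsSymm)
    (SigXhat : ∀ n, Ω n → Matrix (Fin (r n)) (Fin (r n)) ℝ)
    (hSigXhat : ∀ n ω, (SigXhat n ω).PosSemidef)
    (SigYXhat : ∀ n, Ω n → Matrix (Fin (d n)) (Fin (r n)) ℝ)
    (SigXdag : ∀ n, Ω n → Matrix (Fin (r n)) (Fin (r n)) ℝ)
    (hSigXdag : ∀ n ω, (SigXdag n ω).PosDef ∧
      (IsUnit (SigXhat n ω).det → SigXdag n ω = (SigXhat n ω)⁻¹))
    -- β̂_n := Σ̂_{YX,n} Σ̂_{X,n}^†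
    (betaHat : ∀ n, Ω n → Matrix (Fin (d n)) (Fin (r n)) ℝ)
    (hbetaHat : ∀ n ω, betaHat n ω = SigYXhat n ω * SigXdag n ω)
    -- Σ̂_{Z,n} and Σ̆_{Z,n}
    (SigZhat : ∀ n, Ω n → Matrix (Fin (d n)) (Fin (d n)) ℝ)
    (hSigZhat : ∀ n ω, SigZhat n ω =
      SigYhat n ω - betaHat n ω * SigXhat n ω * (betaHat n ω)ᵀ)
    (SigZbreve : ∀ n, Ω n → Matrix (Fin (d n)) (Fin (d n)) ℝ)
    (hSigZbreve : ∀ n ω, SigZbreve n ω =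
      SigYhat n ω - SigYXhat n ω * (β n)ᵀ - β n * (SigYXhat n ω)ᵀ +
        β n * SigXhat n ω * (β n)ᵀ)
    -- [C1]
    (hC1 : IsBigOp P (fun n ω => linf (SigY n ω)) (fun _ _ => 1))
    (hC1' : ∃ C : ℝ, ∀ n, linf (β n) ≤ C)
    -- [C2]
    (hC2 : IsBigOp P (fun n ω => lamMax (SigZ n ω) + (lamMin (SigZ n ω))⁻¹) (fun _ _ => 1))
    -- [C3]
    (hC3 : IsBigOp P (fun n ω => linf (SigX n ω) + (lamMin (SigX n ω))⁻¹) (fun _ _ => 1))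
    -- [C4]
    (s : ℕ → ℝ) (hs : ∀ n, 1 ≤ s n)
    (hC4 : IsBigOp P (fun n ω => (spars ((SigZ n ω)⁻¹) : ℝ)) (fun n _ => s n))
    -- the penalty parameters λ_n, positive random variables
    (lam : ∀ n, Ω n → ℝ) (hlam : ∀ n ω, 0 < lam n ω)
    -- [D1]
    (hD1a : IsLittleOp P (fun n ω => linf (SigXhat n ω - SigX n ω)) lam)
    (hD1b : IsLittleOp P (fun n ω => linf (SigYXhat n ω - β n * SigXhat n ω)) lam)
    (hD1c : IsLittleOp P (fun n ω => linf (SigZbreve n ω - SigZ n ω)) lam)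
    -- [D2]
    (hD2 : IsLittleOp P (fun n ω => (s n + r n) * lam n ω) (fun _ _ => 1))
    -- [D3]
    (hD3 : Filter.Tendsto (fun n => ((P n) {ω |
        (Matrix.fromBlocks (SigXhat n ω) ((SigYXhat n ω)ᵀ)
          (SigYXhat n ω) (SigYhat n ω)).PosSemidef}).toReal)
      Filter.atTop (nhds 1)) :
    IsLittleOp P (fun n ω => linf (SigZhat n ω - SigZ n ω)) lam ∧
    Filter.Tendsto (fun n => ((P n) {ω | ∀ i, 0 < SigZhat n ω i i}).toReal)
      Filter.atTop (nhds 1) := by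
  classical
  have key : IsLittleOp P (fun n ω => linf (SigZhat n ω - SigZ n ω)) lam := by
    intro ε hε
    refine cl_tendsto_zero _ (fun n => ENNReal.toReal_nonneg) ?_
    intro δ hδ
    obtain ⟨M, hM, hMtail⟩ := hC3 (δ/2) (by linarith)
    set c2 : ℝ := min ((2*M)⁻¹) (ε/(4*M)) with hc2def
    have hc2pos : 0 < c2 := lt_min (by positivity) (by positivity)
    have hc2a : c2 ≤ (2*M)⁻¹ := by rw [hc2def]; exact min_le_left _ _
    have hc2b : c2 ≤ ε/(4*M) := by rw [hc2def]; exact min_le_right _ _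
    have hb2 : Tendsto (fun n => ((P n) {ω | (1:ℝ) * lam n ω <
        |linf (SigXhat n ω - SigX n ω)|}).toReal) atTop (𝓝 0) := hD1a 1 one_pos
    have hb3 : Tendsto (fun n => ((P n) {ω | c2 * 1 <
        |(s n + (r n : ℝ)) * lam n ω|}).toReal) atTop (𝓝 0) := hD2 c2 hc2pos
    have hb4 : Tendsto (fun n => ((P n) {ω | (1:ℝ) * lam n ω <
        |linf (SigYXhat n ω - β n * SigXhat n ω)|}).toReal) atTop (𝓝 0) := hD1b 1 one_pos
    have hb5 : Tendsto (fun n => ((P n) {ω | (ε/2) * lam n ω <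
        |linf (SigZbreve n ω - SigZ n ω)|}).toReal) atTop (𝓝 0) := hD1c (ε/2) (by linarith)
    have hb1 : ∀ᶠ n in atTop, ((P n) {ω | M * 1 <
        |linf (SigX n ω) + (lamMin (SigX n ω))⁻¹|}).toReal < δ/2 + δ/12 :=
      cl_ev_lt_of_limsup (fun n => cl_prob_le_one _ _) hMtail (by linarith)
    have hb6 : ∀ n, ((P n) {ω | ¬ (SigX n ω).PosDef}).toReal = 0 := fun n => by
      rw [ae_iff.mp (hSigX n)]; simp
    filter_upwards [hb1, cl_ev_lt_of_tendsto hb2 (show (0:ℝ) < δ/12 by linarith),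
      cl_ev_lt_of_tendsto hb3 (show (0:ℝ) < δ/12 by linarith),
      cl_ev_lt_of_tendsto hb4 (show (0:ℝ) < δ/12 by linarith),
      cl_ev_lt_of_tendsto hb5 (show (0:ℝ) < δ/12 by linarith)] with n k1 k2 k3 k4 k5
    set T1 := {ω : Ω n | M * 1 < |linf (SigX n ω) + (lamMin (SigX n ω))⁻¹|} with hT1
    set T2 := {ω : Ω n | (1:ℝ) * lam n ω < |linf (SigXhat n ω - SigX n ω)|} with hT2
    set T3 := {ω : Ω n | c2 * 1 < |(s n + (r n : ℝ)) * lam n ω|} with hT3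
    set T4 := {ω : Ω n | (1:ℝ) * lam n ω < |linf (SigYXhat n ω - β n * SigXhat n ω)|} with hT4
    set T5 := {ω : Ω n | (ε/2) * lam n ω < |linf (SigZbreve n ω - SigZ n ω)|} with hT5
    set T6 := {ω : Ω n | ¬ (SigX n ω).PosDef} with hT6
    have hsub : {ω : Ω n | ε * lam n ω < |linf (SigZhat n ω - SigZ n ω)|} ⊆
        T1 ∪ (T2 ∪ (T3 ∪ (T4 ∪ (T5 ∪ T6)))) := by
      intro ω hω
      by_contra hc
      simp only [hT1, hT2, hT3, hT4, hT5, hT6, Set.mem_union, Set.mem_setOf_eq, not_or,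
        not_lt, not_not] at hc
      obtain ⟨m1, m2, m3, m4, m5, m6⟩ := hc
      simp only [Set.mem_setOf_eq] at hω
      have hlv := hlam n ω
      have hA2 : linf (SigXhat n ω - SigX n ω) ≤ lam n ω := by
        rw [abs_of_nonneg (cl_linf_nonneg _), one_mul] at m2; exact m2
      have hsr : (0:ℝ) ≤ s n + (r n : ℝ) := by
        have h' := hs n
        have h'' : (0:ℝ) ≤ (r n : ℝ) := Nat.cast_nonneg _
        linarith
      have hA3 : (s n + (r n : ℝ)) * lam n ω ≤ c2 := by
        rw [abs_of_nonneg (mul_nonneg hsr hlv.le), mul_one] at m3; exact m3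
      have hA5 : linf (SigZbreve n ω - SigZ n ω) ≤ (ε/2) * lam n ω := by
        rw [abs_of_nonneg (cl_linf_nonneg _)] at m5; exact m5
      rcases Nat.eq_zero_or_pos (r n) with hr0 | hr1
      · haveI : IsEmpty (Fin (r n)) := by rw [hr0]; infer_instance
        have z1 : betaHat n ω * SigXhat n ω * (betaHat n ω)ᵀ = 0 := by
          ext i j; simp [Matrix.mul_apply]
        have z2 : SigYXhat n ω * (β n)ᵀ = 0 := by ext i j; simp [Matrix.mul_apply]
        have z3 : β n * (SigYXhat n ω)ᵀ = 0 := by ext i j; simp [Matrix.mul_apply]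
        have z4 : β n * SigXhat n ω * (β n)ᵀ = 0 := by ext i j; simp [Matrix.mul_apply]
        have heq : SigZhat n ω = SigZbreve n ω := by
          rw [hSigZhat, hSigZbreve, z1, z2, z3, z4]; simp
        rw [heq, abs_of_nonneg (cl_linf_nonneg _)] at hω
        nlinarith
      · have hXpd := m6
        have hminpos : 0 < lamMin (SigX n ω) := cl_lamMin_pos hr1 hXpd
        have hk1 : (lamMin (SigX n ω))⁻¹ ≤ M := by
          have h' := le_trans (le_abs_self _) m1
          have h'' := cl_linf_nonneg (SigX n ω)
          rw [mul_one] at h'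
          linarith
        have hA4 : linf (SigYXhat n ω - β n * SigXhat n ω) ≤ lam n ω := by
          rw [abs_of_nonneg (cl_linf_nonneg _), one_mul] at m4; exact m4
        have hrs : (r n : ℝ) * lam n ω ≤ (s n + (r n : ℝ)) * lam n ω := by
          have h' := hs n
          nlinarith
        have hZh' : SigZhat n ω = SigYhat n ω -
            (SigYXhat n ω * SigXdag n ω) * SigXhat n ω * (SigYXhat n ω * SigXdag n ω)ᵀ := by
          rw [hSigZhat, hbetaHat]
        have hfin : linf (SigZhat n ω - SigZ n ω) ≤ ε * lam n ω :=
          cl_main_det hr1 hXpd (hSigXhat n ω) (hSigXdag n ω).2 hZh' (hSigZbreve n ω)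
            hM hlv hε hk1 hA2 hrs hA3 hc2a hc2b hA4 hA5
        rw [abs_of_nonneg (cl_linf_nonneg _)] at hω
        linarith
    show ((P n) {ω : Ω n | ε * lam n ω < |linf (SigZhat n ω - SigZ n ω)|}).toReal < δ
    have u1 := cl_measure_le (P n) hsub
    have u2 := cl_measure_le (P n) (Set.Subset.refl (T2 ∪ (T3 ∪ (T4 ∪ (T5 ∪ T6)))))
    have u3 := cl_measure_le (P n) (Set.Subset.refl (T3 ∪ (T4 ∪ (T5 ∪ T6))))
    have u4 := cl_measure_le (P n) (Set.Subset.refl (T4 ∪ (T5 ∪ T6)))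
    have u5 := cl_measure_le (P n) (Set.Subset.refl (T5 ∪ T6))
    have h6 : ((P n) T6).toReal = 0 := hb6 n
    linarith
  refine ⟨key, ?_⟩
  have hkey1 : Tendsto (fun n => ((P n) {ω | (1:ℝ) * lam n ω <
      |linf (SigZhat n ω - SigZ n ω)|}).toReal) atTop (𝓝 0) := key 1 one_pos
  have h0 : Tendsto (fun n => 1 - ((P n) {ω | ∀ i, 0 < SigZhat n ω i i}).toReal)
      atTop (𝓝 0) := by
    refine cl_tendsto_zero _ (fun n => by
      have := cl_prob_le_one (P n) {ω | ∀ i, 0 < SigZhat n ω i i}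
      linarith) ?_
    intro δ hδ
    obtain ⟨M2, hM2, htail2⟩ := hC2 (δ/2) (by linarith)
    set c4 : ℝ := (2*M2)⁻¹ with hc4def
    have hc4pos : 0 < c4 := by positivity
    have hb3 : Tendsto (fun n => ((P n) {ω | c4 * 1 <
        |(s n + (r n : ℝ)) * lam n ω|}).toReal) atTop (𝓝 0) := hD2 c4 hc4pos
    have hb1 : ∀ᶠ n in atTop, ((P n) {ω | M2 * 1 <
        |lamMax (SigZ n ω) + (lamMin (SigZ n ω))⁻¹|}).toReal < δ/2 + δ/8 :=
      cl_ev_lt_of_limsup (fun n => cl_prob_le_one _ _) htail2 (by linarith)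
    have hb2 : ∀ n, ((P n) {ω | ¬ (SigZ n ω).PosDef}).toReal = 0 := fun n => by
      rw [ae_iff.mp (hSigZ n)]; simp
    filter_upwards [hb1, cl_ev_lt_of_tendsto hkey1 (show (0:ℝ) < δ/8 by linarith),
      cl_ev_lt_of_tendsto hb3 (show (0:ℝ) < δ/8 by linarith)] with n k1 k3 k4
    set T1 := {ω : Ω n | M2 * 1 < |lamMax (SigZ n ω) + (lamMin (SigZ n ω))⁻¹|} with hT1
    set T2 := {ω : Ω n | ¬ (SigZ n ω).PosDef} with hT2
    set T3 := {ω : Ω n | (1:ℝ) * lam n ω < |linf (SigZhat n ω - SigZ n ω)|} with hT3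
    set T4 := {ω : Ω n | c4 * 1 < |(s n + (r n : ℝ)) * lam n ω|} with hT4
    have hd1 : 1 ≤ d n := le_trans (by norm_num) (hd n)
    have hsub : {ω : Ω n | ∀ i, 0 < SigZhat n ω i i}ᶜ ⊆ T1 ∪ (T2 ∪ (T3 ∪ T4)) := by
      intro ω hω
      by_contra hc
      simp only [hT1, hT2, hT3, hT4, Set.mem_union, Set.mem_setOf_eq, not_or,
        not_lt, not_not] at hc
      obtain ⟨m1, m2, m3, m4⟩ := hc
      refine hω ?_
      intro i
      have hlv := hlam n ω
      have hZpd := m2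
      have hminpos : 0 < lamMin (SigZ n ω) := cl_lamMin_pos hd1 hZpd
      have i0 : Fin (d n) := ⟨0, by omega⟩
      have hdiag0 : 0 < SigZ n ω i0 i0 := by
        have hne : (Pi.single i0 1 : Fin (d n) → ℝ) ≠ 0 := by
          intro h'
          have h'' := congrFun h' i0
          simp at h''
        have := hZpd.dotProduct_mulVec_pos hne
        have h' : 0 < clQf (SigZ n ω) (Pi.single i0 1 : Fin (d n) → ℝ) := by
          rw [cl_qf_eq_dot]; simpa using this
        rwa [cl_qf_single] at h'
      have hmaxpos : 0 < lamMax (SigZ n ω) :=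
        lt_of_lt_of_le hdiag0 (cl_diag_le_lamMax _ i0)
      have hk1 : (lamMin (SigZ n ω))⁻¹ ≤ M2 := by
        have h' := le_trans (le_abs_self _) m1
        rw [mul_one] at h'
        linarith
      have hMinv : M2⁻¹ ≤ lamMin (SigZ n ω) := by
        have := inv_anti₀ (inv_pos.mpr hminpos) hk1
        simpa using this
      have hA3 : linf (SigZhat n ω - SigZ n ω) ≤ lam n ω := by
        rw [abs_of_nonneg (cl_linf_nonneg _), one_mul] at m3; exact m3
      have hsr : (0:ℝ) ≤ s n + (r n : ℝ) := by
        have h' := hs n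
        have h'' : (0:ℝ) ≤ (r n : ℝ) := Nat.cast_nonneg _
        linarith
      have hA4 : (s n + (r n : ℝ)) * lam n ω ≤ c4 := by
        rw [abs_of_nonneg (mul_nonneg hsr hlv.le), mul_one] at m4; exact m4
      have hlamc4 : lam n ω ≤ c4 := by
        have h' := hs n
        have h'' : (0:ℝ) ≤ (r n : ℝ) := Nat.cast_nonneg _
        nlinarith
      have hdiag : M2⁻¹ ≤ SigZ n ω i i :=
        le_trans hMinv (cl_lamMin_le_diag _ i)
      have hpert : |(SigZhat n ω - SigZ n ω) i i| ≤ c4 :=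
        le_trans (cl_abs_le_linf _ i i) (le_trans hA3 hlamc4)
      have hsubapply : (SigZhat n ω - SigZ n ω) i i = SigZhat n ω i i - SigZ n ω i i := by
        simp [Matrix.sub_apply]
      have habs := neg_le_of_abs_le hpert
      rw [hsubapply] at habs
      have hMc : M2⁻¹ - (2*M2)⁻¹ = (2*M2)⁻¹ := by field_simp; ring
      have hc4lt : c4 < M2⁻¹ := by
        rw [hc4def]
        have : (0:ℝ) < (2*M2)⁻¹ := by positivity
        linarith [hMc]
      linarith
    have u1 := cl_measure_le (P n) hsub
    have u2 := cl_measure_le (P n) (Set.Subset.refl (T2 ∪ (T3 ∪ T4)))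
    have u3 := cl_measure_le (P n) (Set.Subset.refl (T3 ∪ T4))
    have h2 : ((P n) T2).toReal = 0 := hb2 n
    have huniv : (1:ℝ) ≤ ((P n) {ω : Ω n | ∀ i, 0 < SigZhat n ω i i}).toReal +
        ((P n) {ω : Ω n | ∀ i, 0 < SigZhat n ω i i}ᶜ).toReal := by
      have hsu : (Set.univ : Set (Ω n)) ⊆ {ω : Ω n | ∀ i, 0 < SigZhat n ω i i} ∪
          {ω : Ω n | ∀ i, 0 < SigZhat n ω i i}ᶜ := by
        rw [Set.union_compl_self]
      have h' := cl_measure_le (P n) hsu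
      have h'' : ((P n) (Set.univ : Set (Ω n))).toReal = 1 := by
        rw [measure_univ]; simp
      linarith
    show 1 - ((P n) {ω : Ω n | ∀ i, 0 < SigZhat n ω i i}).toReal < δ
    linarith
  have := (tendsto_const_nhds (x := (1:ℝ)) (f := atTop)).sub h0
  simpa using this


end
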